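/- Let $(X,d_X)$ and $(Y,d_Y)$ be metric spaces, $x_0 \in X$, $\ell \geq 0$, and $f: X \to Y$ a bijection with $d_Y(f(x),f(x')) = d_X(x,x')$ for $x,x' \neq x_0$, $d_Y(f(x),f(x_0)) = d_X(x,x_0)+\ell$ for $x \neq x_0$. Let $y_0 = f(x_0)$ and define $\gamma_t: Y \to \mathbb{R}$ for $t \in [0,\ell]$ by $\gamma_t(y_0) = t$ and $\gamma_t(y) = d_Y(y,y_0) - t$ for $y \neq y_0$. Then $\gamma_t$ lies in the tight span $T(Y,d_Y)$ for every $t \in [0,\ell]$, and $d_\infty(\gamma_t,\gamma_s) = |t-s|$. -/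
import Mathlib


/-- The path `γ_t` in the tight span: `γ_t(y₀) = t` and `γ_t(y) = d(y,y₀) - t` otherwise. -/
noncomputable def gammaPath {Y : Type*} [MetricSpace Y] [DecidableEq Y]
    (y0 : Y) (t : ℝ) : Y → ℝ :=
  fun y => if y = y0 then t else dist y y0 - t

/-- Let `f : X → Y` be a bijection of finite metric spaces that is an isometry away from
`x₀` and stretches all distances to `x₀` by `ℓ ≥ 0`.  Then for every `t ∈ [0, ℓ]` the
function `γ_t` lies in the tight span `T(Y, d_Y)` (it satisfies
`d(y,y') ≤ γ_t(y) + γ_t(y')` and `γ_t(y) = sup_{y'} (d(y,y') - γ_t(y'))`), and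
`d_∞(γ_t, γ_s) = |t - s|` for `t, s ∈ [0, ℓ]`. -/
theorem stmt17 {X Y : Type*} [MetricSpace X] [MetricSpace Y]
    [Fintype X] [Fintype Y] [DecidableEq Y] [Nontrivial X]
    (x0 : X) (ℓ : ℝ) (hℓ : 0 ≤ ℓ) (f : X → Y) (hf : Function.Bijective f)
    (hiso : ∀ x x' : X, x ≠ x0 → x' ≠ x0 → dist (f x) (f x') = dist x x')
    (hext : ∀ x : X, x ≠ x0 → dist (f x) (f x0) = dist x x0 + ℓ) :
    ∀ t ∈ Set.Icc (0 : ℝ) ℓ,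
      ((∀ y y' : Y, dist y y' ≤ gammaPath (f x0) t y + gammaPath (f x0) t y') ∧
        (∀ y : Y, IsLUB (Set.range fun y' => dist y y' - gammaPath (f x0) t y')
          (gammaPath (f x0) t y))) ∧
      (∀ s ∈ Set.Icc (0 : ℝ) ℓ,
        IsLUB (Set.range fun y => |gammaPath (f x0) t y - gammaPath (f x0) s y|)
          |t - s|) := by
  have hntY : Nontrivial Y := by
    obtain ⟨a, b, hab⟩ := exists_pair_ne X
    exact ⟨f a, f b, hf.injective.ne hab⟩
  set y0 := f x0 with hy0
  have key : ∀ y : Y, y ≠ y0 → ∃ x : X, x ≠ x0 ∧ f x = y ∧ dist y y0 = dist x x0 + ℓ := by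
    intro y hy
    obtain ⟨x, rfl⟩ := hf.surjective y
    have hx : x ≠ x0 := by rintro rfl; exact hy rfl
    exact ⟨x, hx, rfl, hext x hx⟩
  intro t ht
  obtain ⟨ht0, htl⟩ := ht
  have h1 : ∀ y y' : Y, dist y y' ≤ gammaPath y0 t y + gammaPath y0 t y' := by
    intro y y'
    by_cases hy : y = y0 <;> by_cases hy' : y' = y0
    · simp only [gammaPath, hy, hy', if_pos rfl]
      simp [hy, hy']
      linarith
    · simp only [gammaPath, if_pos hy, if_neg hy']
      rw [hy, dist_comm]
      linarith
    · simp only [gammaPath, if_neg hy, if_pos hy']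
      rw [hy']
      linarith
    · obtain ⟨x, hx, hfx, hdx⟩ := key y hy
      obtain ⟨x', hx', hfx', hdx'⟩ := key y' hy'
      have hdd : dist y y' = dist x x' := by rw [← hfx, ← hfx']; exact hiso x x' hx hx'
      have htri : dist x x' ≤ dist x x0 + dist x' x0 := by
        rw [dist_comm x' x0]; exact dist_triangle x x0 x'
      simp only [gammaPath, if_neg hy, if_neg hy']
      linarith
  constructor
  · refine ⟨h1, fun y => ?_⟩
    constructor
    · rintro _ ⟨y', rfl⟩
      have := h1 y y'
      dsimp only
      linarith
    · intro b hb
      apply hb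
      by_cases hy : y = y0
      · obtain ⟨y1, hy1⟩ := exists_ne y0
        refine ⟨y1, ?_⟩
        show dist y y1 - gammaPath y0 t y1 = gammaPath y0 t y
        rw [hy]
        simp [gammaPath, hy1]
        rw [dist_comm]
        ring
      · refine ⟨y0, ?_⟩
        show dist y y0 - gammaPath y0 t y0 = gammaPath y0 t y
        simp [gammaPath, hy]
  · intro s hs
    have hval : ∀ y : Y, |gammaPath y0 t y - gammaPath y0 s y| = |t - s| := by
      intro y
      by_cases hy : y = y0
      · simp [gammaPath, hy]
      · simp only [gammaPath, if_neg hy]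
        rw [show dist y y0 - t - (dist y y0 - s) = -(t - s) by ring, abs_neg]
    constructor
    · rintro _ ⟨y, rfl⟩
      dsimp only
      rw [hval y]
    · intro b hb
      apply hb
      exact ⟨y0, hval y0⟩
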